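/- arXiv:1908.06051 — 2 statements merged into one kernel-verified Lean document; each statement's English description precedes it below -/
import Mathlib

section
/- If n ≥ 3 is odd and 2n + 1 is prime, then the labeling of GP(n,1) assigning i to v_i for 1 ≤ i ≤ n, 2n+1 to u_1, and 2n+1−i to u_i for 2 ≤ i ≤ n, is injective with values in {1,...,2n+1} and gives coprime labels to every pair of adjacent vertices. -/
/-- The prism graph `GP(n,1)`: two `n`-cycles `v` (inl) and `u` (inr) joined by a
perfect matching. -/
def prismGraph (n : ℕ) : SimpleGraph (ZMod n ⊕ ZMod n) :=
  SimpleGraph.fromRel (fun x y =>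
    (∃ i : ZMod n, x = Sum.inl i ∧ y = Sum.inl (i + 1)) ∨
    (∃ i : ZMod n, x = Sum.inr i ∧ y = Sum.inr (i + 1)) ∨
    (∃ i : ZMod n, x = Sum.inl i ∧ y = Sum.inr i))

/-- The labeling: `v_i ↦ i`, `u_1 ↦ 2n+1`, `u_i ↦ 2n+1-i` for `2 ≤ i ≤ n`
(vertex of value `j` represents index `j+1`). -/
def prismLabel7 (n : ℕ) : ZMod n ⊕ ZMod n → ℕ
  | Sum.inl i => i.val + 1
  | Sum.inr i => if i.val = 0 then 2 * n + 1 else 2 * n + 1 - (i.val + 1)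

private lemma coprime_of_sum_prime {a b : ℕ} (ha : 0 < a) (hb : 0 < b)
    (hp : Nat.Prime (a + b)) : Nat.Coprime a b := by
  have hd : Nat.gcd a b ∣ a + b := Nat.dvd_add (Nat.gcd_dvd_left a b) (Nat.gcd_dvd_right a b)
  rcases (Nat.Prime.eq_one_or_self_of_dvd hp _ hd) with h | h
  · exact h
  · have := Nat.le_of_dvd ha (Nat.gcd_dvd_left a b)
    omega

private lemma consec_coprime (m : ℕ) : Nat.Coprime m (m + 1) := by
  simp [Nat.coprime_self_add_right]

theorem prism_coprime_labeling_of_twoNPlusOne_prime (n : ℕ) (hn : 3 ≤ n)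
    (hodd : Odd n) (hp : Nat.Prime (2 * n + 1)) :
    Function.Injective (prismLabel7 n) ∧
    (∀ x, prismLabel7 n x ∈ Finset.Icc 1 (2 * n + 1)) ∧
    (∀ x y, (prismGraph n).Adj x y →
      Nat.Coprime (prismLabel7 n x) (prismLabel7 n y)) := by
  haveI : NeZero n := ⟨by omega⟩
  haveI : Fact (1 < n) := ⟨by omega⟩
  have hval : ∀ i : ZMod n, i.val < n := fun i => ZMod.val_lt i
  have hadd : ∀ i : ZMod n, ((i + 1 : ZMod n)).val = (i.val + 1) % n := by
    intro i; rw [ZMod.val_add, ZMod.val_one]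
  have hnotdvd : ∀ m : ℕ, 0 < m → m < 2 * n + 1 → Nat.Coprime (2 * n + 1) m := by
    intro m h1 h2
    rw [hp.coprime_iff_not_dvd]
    intro hd
    have := Nat.le_of_dvd h1 hd
    omega
  refine ⟨?_, ?_, ?_⟩
  · -- injectivity
    rintro (i | i) (j | j) h <;> simp only [prismLabel7] at h
    · exact congrArg Sum.inl (ZMod.val_injective n (by omega))
    · have hi := hval i; have hj := hval j
      split_ifs at h with h0 <;> omega
    · have hi := hval i; have hj := hval j
      split_ifs at h with h0 <;> omega
    · have hi := hval i; have hj := hval j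
      split_ifs at h with h0 h1 h1
      · exact congrArg Sum.inr (ZMod.val_injective n (by omega))
      · omega
      · omega
      · exact congrArg Sum.inr (ZMod.val_injective n (by omega))
  · -- range
    rintro (i | i) <;> simp only [prismLabel7, Finset.mem_Icc]
    · have := hval i; omega
    · have := hval i; split_ifs <;> omega
  · -- coprimality
    have key : ∀ x y, ((∃ i : ZMod n, x = Sum.inl i ∧ y = Sum.inl (i + 1)) ∨
        (∃ i : ZMod n, x = Sum.inr i ∧ y = Sum.inr (i + 1)) ∨
        (∃ i : ZMod n, x = Sum.inl i ∧ y = Sum.inr i)) →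
        Nat.Coprime (prismLabel7 n x) (prismLabel7 n y) := by
      rintro x y (⟨i, rfl, rfl⟩ | ⟨i, rfl, rfl⟩ | ⟨i, rfl, rfl⟩)
      · -- outer cycle
        simp only [prismLabel7, hadd i]
        have hi := hval i
        rcases eq_or_lt_of_le (Nat.succ_le_of_lt hi) with h | h
        · have : (i.val + 1) % n = 0 := by rw [show i.val + 1 = n from h, Nat.mod_self]
          rw [this]
          exact Nat.coprime_one_right _
        · have : (i.val + 1) % n = i.val + 1 := Nat.mod_eq_of_lt h
          rw [this]
          exact consec_coprime _
      · -- inner cycle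
        simp only [prismLabel7, hadd i]
        have hi := hval i
        by_cases h0 : i.val = 0
        · have h1 : (i.val + 1) % n = 1 := by rw [h0]; exact Nat.mod_eq_of_lt (by omega)
          rw [if_pos h0, h1, if_neg (by omega)]
          exact hnotdvd _ (by omega) (by omega)
        · rw [if_neg h0]
          rcases eq_or_lt_of_le (Nat.succ_le_of_lt hi) with h | h
          · have : (i.val + 1) % n = 0 := by rw [show i.val + 1 = n from h, Nat.mod_self]
            rw [this, if_pos rfl]
            exact (hnotdvd _ (by omega) (by omega)).symm
          · have hm : (i.val + 1) % n = i.val + 1 := Nat.mod_eq_of_lt h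
            rw [hm, if_neg (by omega)]
            have : 2 * n + 1 - (i.val + 1) = (2 * n + 1 - (i.val + 1 + 1)) + 1 := by omega
            rw [this]
            exact (consec_coprime _).symm
      · -- matching
        simp only [prismLabel7]
        have hi := hval i
        by_cases h0 : i.val = 0
        · rw [if_pos h0, h0]
          exact Nat.coprime_one_left _
        · rw [if_neg h0]
          exact coprime_of_sum_prime (by omega) (by omega)
            (by rw [show i.val + 1 + (2 * n + 1 - (i.val + 1)) = 2 * n + 1 by omega]; exact hp)
    intro x y hxy
    rw [prismGraph, SimpleGraph.fromRel_adj] at hxy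
    rcases hxy.2 with h | h
    · exact key x y h
    · exact (key y x h).symm
end

section
/- For n ≥ 5 odd and k with 1 ≤ k ≤ (n−1)/2, the generalized Petersen graph GP(n,k) does not admit a prime labeling when k = 2; indeed, the independence number of GP(n,2) is ⌊4n/5⌋ < n for n ≥ 5, so the condition α(G) ≥ ⌊|V(G)|/2⌋ fails. -/
/-- The generalized Petersen graph `GP(n,k)`: outer cycle `v` (inl) with edges
`v_i v_{i+1}`, inner vertices `u` (inr) with edges `u_i u_{i+k}` (indices mod `n`),
and spokes `v_i u_i`. -/
def genPetersen (n k : ℕ) : SimpleGraph (ZMod n ⊕ ZMod n) :=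
  SimpleGraph.fromRel (fun x y =>
    (∃ i : ZMod n, x = Sum.inl i ∧ y = Sum.inl (i + 1)) ∨
    (∃ i : ZMod n, x = Sum.inr i ∧ y = Sum.inr (i + (k : ZMod n))) ∨
    (∃ i : ZMod n, x = Sum.inl i ∧ y = Sum.inr i))

/-- A finset of vertices is independent if no two of its members are adjacent. -/
def IsIndepFinset {V : Type*} (G : SimpleGraph V) (s : Finset V) : Prop :=
  ∀ x ∈ s, ∀ y ∈ s, ¬ G.Adj x y

open Finset

lemma genPetersen_adj (n : ℕ) (x y : ZMod n ⊕ ZMod n) :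
    (genPetersen n 2).Adj x y ↔ x ≠ y ∧
      ((∃ i, x = Sum.inl i ∧ y = Sum.inl (i + 1)) ∨
       (∃ i, x = Sum.inr i ∧ y = Sum.inr (i + 2)) ∨
       (∃ i, x = Sum.inl i ∧ y = Sum.inr i) ∨
       (∃ i, y = Sum.inl i ∧ x = Sum.inl (i + 1)) ∨
       (∃ i, y = Sum.inr i ∧ x = Sum.inr (i + 2)) ∨
       (∃ i, y = Sum.inl i ∧ x = Sum.inr i)) := by
  simp only [genPetersen, SimpleGraph.fromRel_adj, Nat.cast_ofNat]
  constructor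
  · rintro ⟨hne, (h | h | h) | (h | h | h)⟩
    exacts [⟨hne, Or.inl h⟩, ⟨hne, Or.inr (Or.inl h)⟩, ⟨hne, Or.inr (Or.inr (Or.inl h))⟩,
      ⟨hne, Or.inr (Or.inr (Or.inr (Or.inl h)))⟩,
      ⟨hne, Or.inr (Or.inr (Or.inr (Or.inr (Or.inl h))))⟩,
      ⟨hne, Or.inr (Or.inr (Or.inr (Or.inr (Or.inr h))))⟩]
  · rintro ⟨hne, h | h | h | h | h | h⟩
    exacts [⟨hne, Or.inl (Or.inl h)⟩, ⟨hne, Or.inl (Or.inr (Or.inl h))⟩,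
      ⟨hne, Or.inl (Or.inr (Or.inr h))⟩, ⟨hne, Or.inr (Or.inl h)⟩,
      ⟨hne, Or.inr (Or.inr (Or.inl h))⟩, ⟨hne, Or.inr (Or.inr (Or.inr h))⟩]

lemma adj_vv (n : ℕ) (hn : 2 ≤ n) (i : ZMod n) :
    (genPetersen n 2).Adj (Sum.inl i) (Sum.inl (i + 1)) := by
  haveI : Fact (1 < n) := ⟨hn⟩
  rw [genPetersen_adj]
  refine ⟨?_, Or.inl ⟨i, rfl, rfl⟩⟩
  simp only [ne_eq, Sum.inl.injEq]
  intro h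
  exact one_ne_zero (left_eq_add.mp h)

lemma adj_uu (n : ℕ) (hn : 3 ≤ n) (i : ZMod n) :
    (genPetersen n 2).Adj (Sum.inr i) (Sum.inr (i + 2)) := by
  haveI : NeZero n := ⟨by omega⟩
  rw [genPetersen_adj]
  refine ⟨?_, Or.inr (Or.inl ⟨i, rfl, rfl⟩)⟩
  simp only [ne_eq, Sum.inr.injEq]
  intro h
  have h2 : (2 : ZMod n) = 0 := left_eq_add.mp h
  have h3 : ((2 : ℕ) : ZMod n) = 0 := by exact_mod_cast h2
  rw [ZMod.natCast_eq_zero_iff] at h3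
  have := Nat.le_of_dvd (by norm_num) h3
  omega

lemma adj_spoke (n : ℕ) (i : ZMod n) :
    (genPetersen n 2).Adj (Sum.inl i) (Sum.inr i) := by
  rw [genPetersen_adj]
  exact ⟨Sum.inl_ne_inr, Or.inr (Or.inr (Or.inl ⟨i, rfl, rfl⟩))⟩

/-- Upper bound on the size of an independent set in GP(n,2). -/
lemma indep_card_le (n : ℕ) (hn : 5 ≤ n) (s : Finset (ZMod n ⊕ ZMod n))
    (hs : IsIndepFinset (genPetersen n 2) s) : s.card ≤ 4 * n / 5 := by
  haveI : NeZero n := ⟨by omega⟩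
  classical
  set E : Finset (ZMod n) :=
    univ.filter (fun i => Sum.inl i ∉ s ∧ Sum.inr i ∉ s) with hE
  have hinj : Set.InjOn (Sum.elim (id : ZMod n → ZMod n) (id : ZMod n → ZMod n)) ↑s := by
    intro x hx y hy hxy
    cases x with
    | inl i =>
      cases y with
      | inl j => simp_all
      | inr j =>
        simp only [Sum.elim_inl, Sum.elim_inr, id] at hxy
        subst hxy
        exact absurd (adj_spoke n i) (hs _ hx _ hy)
    | inr i =>
      cases y with
      | inl j =>
        simp only [Sum.elim_inl, Sum.elim_inr, id] at hxy
        subst hxy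
        exact absurd (adj_spoke n i) (hs _ hy _ hx)
      | inr j => simp_all
  have hcardA : s.card + E.card ≤ n := by
    have himg : (s.image (Sum.elim id id)).card = s.card := card_image_of_injOn hinj
    have hdisj : Disjoint (s.image (Sum.elim id id)) E := by
      rw [disjoint_left]
      rintro j hj hjE
      simp only [mem_image] at hj
      obtain ⟨x, hx, hxj⟩ := hj
      simp only [hE, mem_filter] at hjE
      cases x with
      | inl i =>
        simp only [Sum.elim_inl, id] at hxj; subst hxj; exact hjE.2.1 hx
      | inr i =>
        simp only [Sum.elim_inr, id] at hxj; subst hxj; exact hjE.2.2 hx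
    calc s.card + E.card = (s.image (Sum.elim id id) ∪ E).card := by
          rw [card_union_of_disjoint hdisj, himg]
      _ ≤ (univ : Finset (ZMod n)).card := card_le_card (subset_univ _)
      _ = n := by rw [card_univ, ZMod.card]
  have hwin : ∀ i : ZMod n, ∃ d : ℕ, d < 5 ∧ (i + (d : ZMod n)) ∈ E := by
    intro i
    by_contra hc
    push_neg at hc
    have hne : ∀ d : ℕ, d < 5 →
        Sum.inl (i + (d : ZMod n)) ∈ s ∨ Sum.inr (i + (d : ZMod n)) ∈ s := by
      intro d hd
      have := hc d hd
      simp only [hE, mem_filter, mem_univ, true_and] at this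
      tauto
    have hVV : ∀ j : ZMod n, Sum.inl j ∈ s → Sum.inl (j + 1) ∈ s → False :=
      fun j h1 h2 => hs _ h1 _ h2 (adj_vv n (by omega) j)
    have hUU : ∀ j : ZMod n, Sum.inr j ∈ s → Sum.inr (j + 2) ∈ s → False :=
      fun j h1 h2 => hs _ h1 _ h2 (adj_uu n (by omega) j)
    have h0 := hne 0 (by norm_num)
    have h1 := hne 1 (by norm_num)
    have h2 := hne 2 (by norm_num)
    have h3 := hne 3 (by norm_num)
    have h4 := hne 4 (by norm_num)
    simp only [Nat.cast_ofNat, Nat.cast_zero, Nat.cast_one, add_zero] at h0 h1 h2 h3 h4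
    have c01 := hVV i
    have c12 := hVV (i + 1); rw [show (i+1)+1 = i+2 by ring] at c12
    have c23 := hVV (i + 2); rw [show (i+2)+1 = i+3 by ring] at c23
    have c34 := hVV (i + 3); rw [show (i+3)+1 = i+4 by ring] at c34
    have u02 := hUU i
    have u13 := hUU (i + 1); rw [show (i+1)+2 = i+3 by ring] at u13
    have u24 := hUU (i + 2); rw [show (i+2)+2 = i+4 by ring] at u24
    rcases h0 with h0 | h0 <;> rcases h1 with h1 | h1 <;> rcases h2 with h2 | h2 <;>
      rcases h3 with h3 | h3 <;> rcases h4 with h4 | h4 <;>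
      first
        | exact c01 h0 h1
        | exact c12 h1 h2
        | exact c23 h2 h3
        | exact c34 h3 h4
        | exact u02 h0 h2
        | exact u13 h1 h3
        | exact u24 h2 h4
  have hcardB : n ≤ 5 * E.card := by
    have hsub : (univ : Finset (ZMod n)) ⊆
        E.biUnion (fun j => (range 5).image (fun d : ℕ => j - (d : ZMod n))) := by
      intro i _
      obtain ⟨d, hd, hdE⟩ := hwin i
      rw [mem_biUnion]
      exact ⟨i + d, hdE, mem_image.mpr ⟨d, mem_range.mpr hd, by ring⟩⟩
    have h1 := card_le_card hsub
    rw [card_univ, ZMod.card] at h1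
    calc n ≤ _ := h1
      _ ≤ ∑ j ∈ E, ((range 5).image (fun d : ℕ => j - (d : ZMod n))).card :=
          card_biUnion_le
      _ ≤ ∑ _j ∈ E, 5 := sum_le_sum (fun j _ => le_trans card_image_le (by simp))
      _ = 5 * E.card := by rw [sum_const, smul_eq_mul, mul_comm]
  omega

lemma modeq_bounded {n a b : ℕ} (h : a ≡ b [MOD n]) (ha : a < 2 * n) (hb : b < 2 * n) :
    a = b ∨ a + n = b ∨ b + n = a := by
  have h' : a % n = b % n := h
  rcases Nat.lt_or_ge a n with h1 | h1 <;> rcases Nat.lt_or_ge b n with h2 | h2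
  · left; rwa [Nat.mod_eq_of_lt h1, Nat.mod_eq_of_lt h2] at h'
  · right; left
    rw [Nat.mod_eq_of_lt h1, Nat.mod_eq_sub_mod h2, Nat.mod_eq_of_lt (by omega)] at h'
    omega
  · right; right
    rw [Nat.mod_eq_sub_mod h1, Nat.mod_eq_of_lt (by omega), Nat.mod_eq_of_lt h2] at h'
    omega
  · left
    rw [Nat.mod_eq_sub_mod h1, Nat.mod_eq_sub_mod h2, Nat.mod_eq_of_lt (by omega),
      Nat.mod_eq_of_lt (by omega)] at h'
    omega

lemma L1 {n a b : ℕ} (hn : 5 ≤ n) (ha : a < n) (hb : b < n)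
    (hpa : (a % 5 = 0 ∨ a % 5 = 2) ∧ a ≠ n - 1)
    (hpb : (b % 5 = 0 ∨ b % 5 = 2) ∧ b ≠ n - 1)
    (h : (b : ZMod n) = (a : ZMod n) + 1) : False := by
  have h' : ((b : ℕ) : ZMod n) = ((a + 1 : ℕ) : ZMod n) := by push_cast; exact h
  have hm := (ZMod.natCast_eq_natCast_iff _ _ _).mp h'
  have := modeq_bounded hm (by omega) (by omega)
  omega

lemma L2 {n a b : ℕ} (hn : 5 ≤ n) (ha : a < n) (hb : b < n)
    (hpa : (a % 5 = 3 ∨ a % 5 = 4) ∨ (a = n - 1 ∧ n % 5 = 3))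
    (hpb : (b % 5 = 3 ∨ b % 5 = 4) ∨ (b = n - 1 ∧ n % 5 = 3))
    (h : (b : ZMod n) = (a : ZMod n) + 2) : False := by
  have h' : ((b : ℕ) : ZMod n) = ((a + 2 : ℕ) : ZMod n) := by push_cast; exact h
  have hm := (ZMod.natCast_eq_natCast_iff _ _ _).mp h'
  have := modeq_bounded hm (by omega) (by omega)
  omega

lemma L3 {n a b : ℕ} (hn : 5 ≤ n) (ha : a < n) (hb : b < n)
    (hpa : (a % 5 = 0 ∨ a % 5 = 2) ∧ a ≠ n - 1)
    (hpb : (b % 5 = 3 ∨ b % 5 = 4) ∨ (b = n - 1 ∧ n % 5 = 3))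
    (h : (b : ZMod n) = (a : ZMod n)) : False := by
  have hm := (ZMod.natCast_eq_natCast_iff _ _ _).mp h
  have := modeq_bounded hm (by omega) (by omega)
  omega

/-- The explicit maximum independent set. -/
def Sset (n : ℕ) : Finset (ZMod n ⊕ ZMod n) :=
  ((range n).filter (fun a => (a % 5 = 0 ∨ a % 5 = 2) ∧ a ≠ n - 1)).image
      (fun a : ℕ => Sum.inl (↑a : ZMod n)) ∪
  ((range n).filter (fun a => (a % 5 = 3 ∨ a % 5 = 4) ∨ (a = n - 1 ∧ n % 5 = 3))).image
      (fun a : ℕ => Sum.inr (↑a : ZMod n))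

lemma Sset_indep (n : ℕ) (hn : 5 ≤ n) : IsIndepFinset (genPetersen n 2) (Sset n) := by
  intro x hx y hy hadj
  rw [genPetersen_adj] at hadj
  obtain ⟨-, hrel⟩ := hadj
  simp only [Sset, mem_union, mem_image, mem_filter, mem_range] at hx hy
  rcases hx with ⟨a, ⟨han, hpa⟩, rfl⟩ | ⟨a, ⟨han, hpa⟩, rfl⟩ <;>
    rcases hy with ⟨b, ⟨hbn, hpb⟩, rfl⟩ | ⟨b, ⟨hbn, hpb⟩, rfl⟩ <;>
    rcases hrel with ⟨i, hxi, hyi⟩ | ⟨i, hxi, hyi⟩ | ⟨i, hxi, hyi⟩ |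
      ⟨i, hyi, hxi⟩ | ⟨i, hyi, hxi⟩ | ⟨i, hyi, hxi⟩ <;>
    simp only [Sum.inl.injEq, Sum.inr.injEq, reduceCtorEq] at hxi hyi
  · exact L1 hn han hbn hpa hpb (by rw [hyi, hxi])
  · exact L1 hn hbn han hpb hpa (by rw [hxi, hyi])
  · exact L3 hn han hbn hpa hpb (by rw [hyi, hxi])
  · exact L3 hn hbn han hpb hpa (by rw [hxi, hyi])
  · exact L2 hn han hbn hpa hpb (by rw [hyi, hxi])
  · exact L2 hn hbn han hpb hpa (by rw [hxi, hyi])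

lemma countA (m : ℕ) :
    ((range m).filter (fun a => a % 5 = 0 ∨ a % 5 = 2)).card = (m + 4) / 5 + (m + 2) / 5 := by
  induction m with
  | zero => simp
  | succ m ih =>
    rw [Finset.range_add_one, filter_insert]
    split_ifs with h
    · rw [card_insert_of_notMem (by simp), ih]; omega
    · rw [ih]; omega

lemma countB (m : ℕ) :
    ((range m).filter (fun a => a % 5 = 3 ∨ a % 5 = 4)).card = (m + 1) / 5 + m / 5 := by
  induction m with
  | zero => simp
  | succ m ih =>
    rw [Finset.range_add_one, filter_insert]
    split_ifs with h
    · rw [card_insert_of_notMem (by simp), ih]; omega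
    · rw [ih]; omega

lemma Sset_card (n : ℕ) (hn : 5 ≤ n) : (Sset n).card = 4 * n / 5 := by
  haveI : NeZero n := ⟨by omega⟩
  have hinj : ∀ (c : ℕ → ZMod n ⊕ ZMod n), (∀ a b : ZMod n, c a.val = c b.val → a = b) → True := fun _ _ => trivial
  have injl : Set.InjOn (fun a : ℕ => Sum.inl (↑a : ZMod n) : ℕ → ZMod n ⊕ ZMod n)
      ↑((range n).filter (fun a => (a % 5 = 0 ∨ a % 5 = 2) ∧ a ≠ n - 1)) := by
    intro a ha b hb hab
    simp only [coe_filter, Set.mem_setOf_eq, mem_range] at ha hb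
    simp only [Sum.inl.injEq] at hab
    have := congrArg ZMod.val hab
    rwa [ZMod.val_cast_of_lt ha.1, ZMod.val_cast_of_lt hb.1] at this
  have injr : Set.InjOn (fun a : ℕ => Sum.inr (↑a : ZMod n) : ℕ → ZMod n ⊕ ZMod n)
      ↑((range n).filter (fun a => (a % 5 = 3 ∨ a % 5 = 4) ∨ (a = n - 1 ∧ n % 5 = 3))) := by
    intro a ha b hb hab
    simp only [coe_filter, Set.mem_setOf_eq, mem_range] at ha hb
    simp only [Sum.inr.injEq] at hab
    have := congrArg ZMod.val hab
    rwa [ZMod.val_cast_of_lt ha.1, ZMod.val_cast_of_lt hb.1] at this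
  have hdisj : Disjoint
      (((range n).filter (fun a => (a % 5 = 0 ∨ a % 5 = 2) ∧ a ≠ n - 1)).image
        (fun a : ℕ => Sum.inl (↑a : ZMod n)))
      (((range n).filter (fun a => (a % 5 = 3 ∨ a % 5 = 4) ∨ (a = n - 1 ∧ n % 5 = 3))).image
        (fun a : ℕ => (Sum.inr (↑a : ZMod n) : ZMod n ⊕ ZMod n))) := by
    rw [disjoint_left]
    rintro x hx hy
    simp only [mem_image] at hx hy
    obtain ⟨a, -, rfl⟩ := hx
    obtain ⟨b, -, hb⟩ := hy
    exact absurd hb (by simp)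
  rw [Sset, card_union_of_disjoint hdisj, card_image_of_injOn injl, card_image_of_injOn injr]
  have e1 : (range n).filter (fun a => (a % 5 = 0 ∨ a % 5 = 2) ∧ a ≠ n - 1)
      = (range (n - 1)).filter (fun a => a % 5 = 0 ∨ a % 5 = 2) := by
    ext a
    simp only [mem_filter, mem_range]
    omega
  rw [e1, countA]
  by_cases h3 : n % 5 = 3
  · have e2 : (range n).filter (fun a => (a % 5 = 3 ∨ a % 5 = 4) ∨ (a = n - 1 ∧ n % 5 = 3))
        = insert (n - 1) ((range n).filter (fun a => a % 5 = 3 ∨ a % 5 = 4)) := by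
      ext a
      simp only [mem_insert, mem_filter, mem_range]
      omega
    rw [e2, card_insert_of_notMem (by simp only [mem_filter, mem_range]; omega), countB]
    omega
  · have e2 : (range n).filter (fun a => (a % 5 = 3 ∨ a % 5 = 4) ∨ (a = n - 1 ∧ n % 5 = 3))
        = (range n).filter (fun a => a % 5 = 3 ∨ a % 5 = 4) := by
      ext a
      simp only [mem_filter, mem_range]
      omega
    rw [e2, countB]
    obtain ⟨q, r, hr, rfl⟩ : ∃ q r, r < 5 ∧ n = 5 * q + r := ⟨n / 5, n % 5, by omega, by omega⟩
    interval_cases r <;> omega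

lemma evens_card (n : ℕ) :
    ((Finset.Icc 1 (2 * n)).filter (fun m => 2 ∣ m)).card = n := by
  have himg : (Finset.Icc 1 (2 * n)).filter (fun m => 2 ∣ m)
      = (Finset.Icc 1 n).image (fun k => 2 * k) := by
    ext m
    simp only [mem_filter, mem_Icc, mem_image]
    constructor
    · rintro ⟨⟨h1, h2⟩, k, rfl⟩
      exact ⟨k, ⟨by omega, by omega⟩, rfl⟩
    · rintro ⟨k, ⟨h1, h2⟩, rfl⟩
      exact ⟨⟨by omega, by omega⟩, k, rfl⟩
  rw [himg, card_image_of_injective _ (fun a b h => by omega), Nat.card_Icc]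
  omega

theorem gpn2_not_prime (n : ℕ) (hn : 5 ≤ n) (hodd : Odd n) :
    (¬ ∃ f : ZMod n ⊕ ZMod n → ℕ, Function.Injective f ∧
        (∀ x, f x ∈ Finset.Icc 1 (2 * n)) ∧
        (∀ x y, (genPetersen n 2).Adj x y → Nat.Coprime (f x) (f y))) ∧
    -- the independence number equals ⌊4n/5⌋, which is < n
    ((∃ s : Finset (ZMod n ⊕ ZMod n), IsIndepFinset (genPetersen n 2) s ∧
        s.card = 4 * n / 5) ∧
      (∀ s : Finset (ZMod n ⊕ ZMod n), IsIndepFinset (genPetersen n 2) s →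
        s.card ≤ 4 * n / 5)) ∧
    4 * n / 5 < n := by
  haveI : NeZero n := ⟨by omega⟩
  refine ⟨?_, ⟨⟨Sset n, Sset_indep n hn, Sset_card n hn⟩, fun s hs => indep_card_le n hn s hs⟩,
    by omega⟩
  rintro ⟨f, hinj, hmem, hcop⟩
  classical
  set T : Finset (ZMod n ⊕ ZMod n) := univ.filter (fun x => 2 ∣ f x) with hT
  have hTind : IsIndepFinset (genPetersen n 2) T := by
    intro x hx y hy hadj
    simp only [hT, mem_filter] at hx hy
    have hc := hcop x y hadj
    have hdvd : 2 ∣ Nat.gcd (f x) (f y) := Nat.dvd_gcd hx.2 hy.2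
    unfold Nat.Coprime at hc
    omega
  have huniv_card : (univ : Finset (ZMod n ⊕ ZMod n)).card = 2 * n := by
    rw [card_univ, Fintype.card_sum, ZMod.card]
    ring
  have himg : univ.image f = Finset.Icc 1 (2 * n) := by
    apply eq_of_subset_of_card_le
    · intro m hm
      simp only [mem_image] at hm
      obtain ⟨x, -, rfl⟩ := hm
      exact hmem x
    · rw [Nat.card_Icc, card_image_of_injective _ hinj, huniv_card]
      omega
  have hTimg : T.image f = (Finset.Icc 1 (2 * n)).filter (fun m => 2 ∣ m) := by
    rw [hT, ← himg, filter_image]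
  have hTcard : T.card = n := by
    have := congrArg Finset.card hTimg
    rwa [card_image_of_injective _ hinj, evens_card] at this
  have := indep_card_le n hn T hTind
  omega
end
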